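/- arXiv:1808.04685 — 7 statements merged into one kernel-verified Lean document; each statement's English description precedes it below -/
import Mathlib

section
/- Consider Algorithm 1 run with constant step size η > 0 from the zero initialization W⁰ = 0. Then along any trajectory of the algorithm (for any choice of sampled indices and any noise values obeying the injection rule), the number of non-zero updates performed is at most T_k⁰ := (k/(η v_min²))·(η‖v‖₂² + 2)·‖ω*‖₂², where v_min := min_{1≤j≤k} |v_j|. -/
open scoped Classical

set_option maxHeartbeats 1000000 in
/-- Theorem 1 (zero initialization): along any trajectory of Algorithm 1 started from
`W⁰ = 0` — for any choice of sampled indices and any noise values obeying the injection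
rule — the number of non-zero updates is at most
`T_k⁰ = (k/(η v_min²)) (η ‖v‖₂² + 2) ‖ω*‖₂²`. -/
theorem theorem1_zero_initialization
    {d k n : ℕ}
    (x : Fin n → EuclideanSpace ℝ (Fin d)) (y : Fin n → ℝ)
    (hx : ∀ i, ‖x i‖ ≤ 1) (hy : ∀ i, y i = 1 ∨ y i = -1)
    (ω : EuclideanSpace ℝ (Fin d)) (hsep : ∀ i, 1 ≤ y i * (inner ℝ ω (x i) : ℝ))
    (v : Fin k → ℝ) (hv : ∀ j, v j ≠ 0) (hvpos : ∃ j, 0 < v j) (hvneg : ∃ j, v j < 0)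
    (vmin : ℝ) (hvmin : IsLeast (Set.range fun j => |v j|) vmin)
    (η : ℝ) (hη : 0 < η)
    (W : ℕ → Fin k → EuclideanSpace ℝ (Fin d)) (hW0 : ∀ j, W 0 j = 0)
    (idx : ℕ → Fin n) (ε : ℕ → Fin k → ℝ)
    (hε : ∀ t j, y (idx t) * v j < 0 → ε t j = 0)
    (hupd : ∀ t j, W (t + 1) j = W t j +
      (η * (if 0 < 1 - y (idx t) * ∑ l, v l * max 0 (inner ℝ (W t l) (x (idx t)) : ℝ)
              then (1 : ℝ) else 0)
        * y (idx t) * v j *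
        (if 0 ≤ (inner ℝ (W t j) (x (idx t)) : ℝ) + ε t j then (1 : ℝ) else 0))
          • x (idx t)) :
    ∀ T : ℕ,
      ((((Finset.range T).filter fun t =>
          (0 < 1 - y (idx t) * ∑ l, v l * max 0 (inner ℝ (W t l) (x (idx t)) : ℝ)) ∧
          ∃ j, 0 ≤ (inner ℝ (W t j) (x (idx t)) : ℝ) + ε t j).card : ℕ) : ℝ) ≤
        k / (η * vmin ^ 2) * ((η * (∑ j, (v j) ^ 2) + 2) * ‖ω‖ ^ 2) := by
  intro T
  set cond : ℕ → Prop := fun t =>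
      (0 < 1 - y (idx t) * ∑ l, v l * max 0 (inner ℝ (W t l) (x (idx t)) : ℝ)) ∧
      ∃ j, 0 ≤ (inner ℝ (W t j) (x (idx t)) : ℝ) + ε t j with hcond
  set C : ℝ := η * (∑ j, (v j) ^ 2) + 2 with hC
  set sgn : Fin k → ℝ := fun j => if 0 ≤ v j then (1 : ℝ) else -1 with hsgn
  have hsv : ∀ j, sgn j * v j = |v j| := by
    intro j
    rcases le_or_gt 0 (v j) with h | h
    · simp only [hsgn, if_pos h, one_mul]; exact (abs_of_nonneg h).symm
    · simp only [hsgn, if_neg (not_le.mpr h)]; rw [abs_of_neg h]; ring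
  have hvmin_pos : 0 < vmin := by
    obtain ⟨j, hj⟩ := hvmin.1
    rw [← hj]
    exact abs_pos.mpr (hv j)
  have hvmin_le : ∀ j, vmin ≤ |v j| := fun j => hvmin.2 ⟨j, rfl⟩
  have hC2 : (2 : ℝ) ≤ C := by
    have : 0 ≤ ∑ j, (v j) ^ 2 := Finset.sum_nonneg fun j _ => sq_nonneg _
    nlinarith
  -- step lemma
  have key : ∀ t,
      ((∑ j, sgn j * (inner ℝ (W t j) ω : ℝ)) + η * vmin * (if cond t then 1 else 0)
        ≤ ∑ j, sgn j * (inner ℝ (W (t+1) j) ω : ℝ)) ∧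
      (∑ j, ‖W (t+1) j‖ ^ 2
        ≤ (∑ j, ‖W t j‖ ^ 2) + η * C * (if cond t then 1 else 0)) := by
    intro t
    by_cases hc : cond t
    · rw [if_pos hc]
      have hc' := hc
      rw [hcond] at hc'
      obtain ⟨hhinge, j0, hj0⟩ := hc'
      have ha : (if 0 < 1 - y (idx t) * ∑ l, v l * max 0 (inner ℝ (W t l) (x (idx t)) : ℝ)
          then (1 : ℝ) else 0) = 1 := if_pos hhinge
      set σ : Fin k → ℝ := fun j =>
        if 0 ≤ (inner ℝ (W t j) (x (idx t)) : ℝ) + ε t j then (1 : ℝ) else 0 with hσ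
      have hσdef : ∀ j, σ j =
          if 0 ≤ (inner ℝ (W t j) (x (idx t)) : ℝ) + ε t j then (1 : ℝ) else 0 :=
        fun j => rfl
      have hσ01 : ∀ j, σ j = 0 ∨ σ j = 1 := by
        intro j
        rw [hσdef j]
        by_cases h : 0 ≤ (inner ℝ (W t j) (x (idx t)) : ℝ) + ε t j
        · right; rw [if_pos h]
        · left; rw [if_neg h]
      have hupd' : ∀ j, W (t+1) j = W t j + (η * y (idx t) * v j * σ j) • x (idx t) := by
        intro j
        rw [hupd t j, ha, mul_one, ← hσdef j]
      have hsep' : 1 ≤ y (idx t) * (inner ℝ ω (x (idx t)) : ℝ) := hsep (idx t)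
      have hyc : y (idx t) * (inner ℝ ω (x (idx t)) : ℝ) ≥ 0 := by linarith
      constructor
      · -- P increases
        have hterm : ∀ j, sgn j * (inner ℝ (W (t+1) j) ω : ℝ) =
            sgn j * (inner ℝ (W t j) ω : ℝ)
              + η * (sgn j * v j) * σ j * (y (idx t) * (inner ℝ ω (x (idx t)) : ℝ)) := by
          intro j
          rw [hupd' j, inner_add_left, real_inner_smul_left,
            real_inner_comm (x (idx t)) ω]
          ring
        have hnn : ∀ j, 0 ≤ η * (sgn j * v j) * σ j
            * (y (idx t) * (inner ℝ ω (x (idx t)) : ℝ)) := by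
          intro j
          rw [hsv j]
          rcases hσ01 j with h | h <;> rw [h]
          · simp
          · exact mul_nonneg (mul_nonneg (mul_nonneg hη.le (abs_nonneg _)) zero_le_one) hyc
        have hj0' : η * vmin ≤ η * (sgn j0 * v j0) * σ j0
            * (y (idx t) * (inner ℝ ω (x (idx t)) : ℝ)) := by
          have hs1 : σ j0 = 1 := by rw [hσdef j0, if_pos hj0]
          rw [hsv j0, hs1]
          have ha1 : η * vmin ≤ η * |v j0| := mul_le_mul_of_nonneg_left (hvmin_le j0) hη.le
          have ha2 : (0:ℝ) ≤ η * |v j0| * 1 :=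
            mul_nonneg (mul_nonneg hη.le (abs_nonneg _)) zero_le_one
          calc η * vmin ≤ η * |v j0| := ha1
            _ = η * |v j0| * 1 * 1 := by ring
            _ ≤ η * |v j0| * 1 * (y (idx t) * (inner ℝ ω (x (idx t)) : ℝ)) :=
                mul_le_mul_of_nonneg_left (hsep (idx t)) ha2
        have hsum : η * vmin ≤ ∑ j, η * (sgn j * v j) * σ j
            * (y (idx t) * (inner ℝ ω (x (idx t)) : ℝ)) :=
          le_trans hj0' (Finset.single_le_sum (fun j _ => hnn j) (Finset.mem_univ j0))
        calc (∑ j, sgn j * (inner ℝ (W t j) ω : ℝ)) + η * vmin * 1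
            ≤ (∑ j, sgn j * (inner ℝ (W t j) ω : ℝ))
              + ∑ j, η * (sgn j * v j) * σ j * (y (idx t) * (inner ℝ ω (x (idx t)) : ℝ)) := by
              rw [mul_one]; linarith
          _ = ∑ j, sgn j * (inner ℝ (W (t+1) j) ω : ℝ) := by
              rw [← Finset.sum_add_distrib]
              exact Finset.sum_congr rfl fun j _ => (hterm j).symm
      · -- Q bounded
        have hx2 : ‖x (idx t)‖ ^ 2 ≤ 1 := by
          have h0 := norm_nonneg (x (idx t))
          have h1 := hx (idx t)
          nlinarith
        have hterm : ∀ j, ‖W (t+1) j‖ ^ 2 ≤ ‖W t j‖ ^ 2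
            + 2 * η * (y (idx t) * (v j * max 0 (inner ℝ (W t j) (x (idx t)) : ℝ)))
            + η^2 * (v j)^2 := by
          intro j
          rw [hupd' j, norm_add_sq_real, real_inner_smul_right, norm_smul, mul_pow,
            Real.norm_eq_abs, sq_abs]
          by_cases hσj : 0 ≤ (inner ℝ (W t j) (x (idx t)) : ℝ) + ε t j
          · have hs1 : σ j = 1 := by rw [hσdef j, if_pos hσj]
            rw [hs1]
            have hkey : y (idx t) * (v j * (inner ℝ (W t j) (x (idx t)) : ℝ))
                ≤ y (idx t) * (v j * max 0 (inner ℝ (W t j) (x (idx t)) : ℝ)) := by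
              rcases le_or_gt 0 (y (idx t) * v j) with h | h
              · have hmax := le_max_right (0:ℝ) ((inner ℝ (W t j) (x (idx t)) : ℝ))
                nlinarith
              · have hε0 : ε t j = 0 := hε t j h
                have hpos : 0 ≤ (inner ℝ (W t j) (x (idx t)) : ℝ) := by
                  rw [hε0, add_zero] at hσj; exact hσj
                rw [max_eq_right hpos]
            have heq : (η * y (idx t) * v j * 1)^2 = η^2 * (v j)^2 := by
              rcases hy (idx t) with h | h <;> rw [h] <;> ring
            rw [heq]
            have t1 : 2 * η * (y (idx t) * (v j * (inner ℝ (W t j) (x (idx t)) : ℝ)))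
                ≤ 2 * η * (y (idx t) * (v j * max 0 (inner ℝ (W t j) (x (idx t)) : ℝ))) :=
              mul_le_mul_of_nonneg_left hkey (by linarith)
            have t2 : η^2 * (v j)^2 * ‖x (idx t)‖^2 ≤ η^2 * (v j)^2 :=
              mul_le_of_le_one_right (by positivity) hx2
            nlinarith [t1, t2]
          · have hs0 : σ j = 0 := by rw [hσdef j, if_neg hσj]
            rw [hs0]
            have hkey : 0 ≤ y (idx t) * (v j * max 0 (inner ℝ (W t j) (x (idx t)) : ℝ)) := by
              rcases le_or_gt 0 (y (idx t) * v j) with h | h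
              · have hmax := le_max_left (0:ℝ) ((inner ℝ (W t j) (x (idx t)) : ℝ))
                nlinarith
              · have hε0 : ε t j = 0 := hε t j h
                have hneg : (inner ℝ (W t j) (x (idx t)) : ℝ) < 0 := by
                  rw [hε0, add_zero] at hσj
                  exact not_le.mp hσj
                rw [max_eq_left hneg.le]
                simp
            nlinarith [mul_nonneg (show (0:ℝ) ≤ 2*η by linarith) hkey, sq_nonneg (η * v j),
              sq_nonneg (v j)]
        have e1 : ∑ j, (2 * η * (y (idx t) * (v j * max 0 (inner ℝ (W t j) (x (idx t)) : ℝ))))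
            = 2 * η * (y (idx t) * ∑ j, v j * max 0 (inner ℝ (W t j) (x (idx t)) : ℝ)) := by
          simp only [Finset.mul_sum]
          try exact Finset.sum_congr rfl fun j _ => by ring
        have e2 : ∑ j, (η^2 * (v j)^2) = η^2 * ∑ j, (v j)^2 := (Finset.mul_sum _ _ _).symm
        calc ∑ j, ‖W (t+1) j‖ ^ 2
            ≤ ∑ j, (‖W t j‖ ^ 2
                + 2 * η * (y (idx t) * (v j * max 0 (inner ℝ (W t j) (x (idx t)) : ℝ)))
                + η^2 * (v j)^2) := Finset.sum_le_sum fun j _ => hterm j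
          _ = (∑ j, ‖W t j‖ ^ 2)
                + 2 * η * (y (idx t) * ∑ j, v j * max 0 (inner ℝ (W t j) (x (idx t)) : ℝ))
                + η^2 * ∑ j, (v j)^2 := by
              rw [Finset.sum_add_distrib, Finset.sum_add_distrib, e1, e2]
          _ ≤ (∑ j, ‖W t j‖ ^ 2) + η * C * 1 := by
              rw [hC]
              nlinarith [mul_pos hη hhinge]
    · rw [if_neg hc]
      have hc' : ¬((0 < 1 - y (idx t) * ∑ l, v l * max 0 (inner ℝ (W t l) (x (idx t)) : ℝ)) ∧
          ∃ j, 0 ≤ (inner ℝ (W t j) (x (idx t)) : ℝ) + ε t j) := hc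
      push_neg at hc'
      have hsame : ∀ j, W (t+1) j = W t j := by
        intro j
        rw [hupd t j]
        by_cases hA : 0 < 1 - y (idx t) * ∑ l, v l * max 0 (inner ℝ (W t l) (x (idx t)) : ℝ)
        · rw [if_neg (not_le.mpr (hc' hA j))]
          simp
        · rw [if_neg hA]
          simp
      constructor
      · rw [mul_zero, add_zero]
        exact le_of_eq (Finset.sum_congr rfl fun j _ => by rw [hsame j])
      · rw [mul_zero, add_zero]
        exact le_of_eq (Finset.sum_congr rfl fun j _ => by rw [hsame j])
  -- induction
  set M : ℕ → ℕ := fun T => ((Finset.range T).filter cond).card with hM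
  have main : ∀ T, η * vmin * (M T : ℝ) ≤ (∑ j, sgn j * (inner ℝ (W T j) ω : ℝ))
      ∧ (∑ j, ‖W T j‖ ^ 2) ≤ η * C * (M T : ℝ) := by
    intro T
    induction T with
    | zero =>
      constructor
      · simp [hM, hW0]
      · simp [hM, hW0]
    | succ T ih =>
      obtain ⟨ih1, ih2⟩ := ih
      obtain ⟨k1, k2⟩ := key T
      have hMcard : (M (T+1) : ℝ) = (M T : ℝ) + (if cond T then 1 else 0) := by
        simp only [hM]
        rw [Finset.range_add_one, Finset.filter_insert]
        by_cases h : cond T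
        · rw [if_pos h, if_pos h, Finset.card_insert_of_notMem (by simp)]
          push_cast; ring
        · rw [if_neg h, if_neg h, add_zero]
      constructor
      · rw [hMcard]
        by_cases h : cond T
        · rw [if_pos h] at k1 hMcard ⊢
          linarith
        · rw [if_neg h] at k1 hMcard ⊢
          linarith
      · rw [hMcard]
        by_cases h : cond T
        · rw [if_pos h] at k2 hMcard ⊢
          linarith
        · rw [if_neg h] at k2 hMcard ⊢
          linarith
  obtain ⟨h1, h2⟩ := main T
  have hPbound : (∑ j, sgn j * (inner ℝ (W T j) ω : ℝ)) ≤ ∑ j, ‖W T j‖ * ‖ω‖ := by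
    apply Finset.sum_le_sum
    intro j _
    have hcs : (inner ℝ (W T j) ω : ℝ) ≤ ‖W T j‖ * ‖ω‖ := real_inner_le_norm _ _
    have hcs' : -(‖W T j‖ * ‖ω‖) ≤ (inner ℝ (W T j) ω : ℝ) := by
      have h0 := real_inner_le_norm (W T j) (-ω)
      rw [inner_neg_right, norm_neg] at h0
      linarith
    rcases le_or_gt 0 (v j) with h | h
    · simp only [hsgn, if_pos h, one_mul]; exact hcs
    · simp only [hsgn, if_neg (not_le.mpr h)]; nlinarith
  have hsumnorm : (∑ j, ‖W T j‖) ^ 2 ≤ (k : ℝ) * ∑ j, ‖W T j‖ ^ 2 := by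
    have h0 := sq_sum_le_card_mul_sum_sq (s := (Finset.univ : Finset (Fin k)))
      (f := fun j => ‖W T j‖)
    simpa using h0
  have hsn : (∑ j, sgn j * (inner ℝ (W T j) ω : ℝ)) ≤ (∑ j, ‖W T j‖) * ‖ω‖ := by
    calc (∑ j, sgn j * (inner ℝ (W T j) ω : ℝ)) ≤ ∑ j, ‖W T j‖ * ‖ω‖ := hPbound
      _ = (∑ j, ‖W T j‖) * ‖ω‖ := (Finset.sum_mul _ _ _).symm
  have hm0 : (0:ℝ) ≤ (M T : ℝ) := Nat.cast_nonneg _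
  have hω0 : (0:ℝ) ≤ ‖ω‖ := norm_nonneg _
  have hS0 : (0:ℝ) ≤ ∑ j, ‖W T j‖ := Finset.sum_nonneg fun j _ => norm_nonneg _
  have h3 : η * vmin * (M T : ℝ) ≤ (∑ j, ‖W T j‖) * ‖ω‖ := le_trans h1 hsn
  have ha0 : (0:ℝ) ≤ η * vmin * (M T : ℝ) :=
    mul_nonneg (mul_nonneg hη.le hvmin_pos.le) hm0
  have h4 : (η * vmin * (M T : ℝ))^2 ≤ ((∑ j, ‖W T j‖) * ‖ω‖)^2 := by
    have hb : (0:ℝ) ≤ (∑ j, ‖W T j‖) * ‖ω‖ := mul_nonneg hS0 hω0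
    exact sq_le_sq' (by linarith) h3
  have h6 : ((∑ j, ‖W T j‖))^2 * ‖ω‖^2 ≤ ((k:ℝ) * (η * C * (M T : ℝ))) * ‖ω‖^2 := by
    have h5 : (∑ j, ‖W T j‖)^2 ≤ (k:ℝ) * (η * C * (M T : ℝ)) :=
      le_trans hsumnorm (mul_le_mul_of_nonneg_left h2 (Nat.cast_nonneg k))
    exact mul_le_mul_of_nonneg_right h5 (sq_nonneg _)
  have hsq : (η * vmin * (M T : ℝ))^2 ≤ ((k:ℝ) * (η * C * (M T : ℝ))) * ‖ω‖^2 := by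
    calc (η * vmin * (M T : ℝ))^2 ≤ ((∑ j, ‖W T j‖) * ‖ω‖)^2 := h4
      _ = ((∑ j, ‖W T j‖))^2 * ‖ω‖^2 := by ring
      _ ≤ _ := h6
  have hden : (0:ℝ) < η * vmin^2 := mul_pos hη (pow_pos hvmin_pos 2)
  have hgoal : (M T : ℝ) ≤ (k:ℝ) / (η * vmin ^ 2) * (C * ‖ω‖ ^ 2) := by
    rcases eq_or_lt_of_le hm0 with h | h
    · rw [← h]
      have hb1 : (0:ℝ) ≤ (k:ℝ) / (η * vmin ^ 2) := div_nonneg (Nat.cast_nonneg k) hden.le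
      have hb2 : (0:ℝ) ≤ C * ‖ω‖^2 := mul_nonneg (by linarith) (sq_nonneg _)
      exact mul_nonneg hb1 hb2
    · have hpos : (0:ℝ) < η * (M T : ℝ) := mul_pos hη h
      have h2' : η * vmin^2 * (M T : ℝ) ≤ (k:ℝ) * (C * ‖ω‖^2) := by
        apply le_of_mul_le_mul_right _ hpos
        calc η * vmin^2 * (M T : ℝ) * (η * (M T : ℝ))
            = (η * vmin * (M T : ℝ))^2 := by ring
          _ ≤ ((k:ℝ) * (η * C * (M T : ℝ))) * ‖ω‖^2 := hsq
          _ = (k:ℝ) * (C * ‖ω‖^2) * (η * (M T : ℝ)) := by ring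
      rw [div_mul_eq_mul_div, le_div_iff₀ hden]
      linarith
  exact hgoal
end

section
/- Lower bound on the number of updates (Theorem 2, deterministic core): Fix d ≥ 1, η > 0, v ∈ ℝ^k, and let e_1, …, e_d be the canonical basis of ℝ^d. Consider the linearly separable dataset S₁ = {(e_1, +1), …, (e_d, +1)} (separated by the all-ones vector ω* with margin 1, and ‖ω*‖₂² = d). Let p ≥ 1 be an integer, let (i_1, …, i_{dp}) be a sequence in {1, …, d} in which each index appears exactly p times, let δ_{j,t} ∈ {0,1} be arbitrary, and define w_j = η v_j Σ_{t=1}^{dp} δ_{j,t} e_{i_t} for j = 1, …, k (the form of any iterate of Algorithm 1 from W⁰ = 0 after dp iterations with deterministic cycling). If for some s ∈ {1, …, d} the network output satisfies Σ_{j=1}^k v_j max(0, ⟨w_j, e_s⟩) ≥ 1 (as required at any global minimum of L_{S₁}), then p ≥ 1/(η‖v‖₂²); consequently the number of iterations dp is at least d/(η‖v‖₂²) = ‖ω*‖₂²/(η‖v‖₂²). -/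
/-- Theorem 2 (lower bound, deterministic core): on the dataset `{(e_1,+1),…,(e_d,+1)}`
(separated with margin 1 by the all-ones vector `ω*`, which satisfies `‖ω*‖₂² = d`),
any iterate of Algorithm 1 started from `W⁰ = 0` after `d p` iterations of deterministic
cycling has rows of the form `w_j = η v_j ∑_t δ_{j,t} e_{i_t}`; if its network output on
some basis vector is at least `1`, then `p ≥ 1/(η ‖v‖₂²)`, hence the number of iterations
`d p` is at least `d/(η ‖v‖₂²) = ‖ω*‖₂²/(η ‖v‖₂²)`. -/
theorem lower_bound_on_updates
    {d k : ℕ} (hd : 1 ≤ d) (η : ℝ) (hη : 0 < η) (v : Fin k → ℝ)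
    (e : Fin d → EuclideanSpace ℝ (Fin d)) (he : ∀ s, e s = EuclideanSpace.single s 1)
    (ω : EuclideanSpace ℝ (Fin d)) (hω : ∀ l, ω l = 1)
    (p : ℕ) (hp : 1 ≤ p)
    (i : Fin (d * p) → Fin d)
    (hi : ∀ s, (Finset.univ.filter fun t => i t = s).card = p)
    (δ : Fin k → Fin (d * p) → ℝ) (hδ : ∀ j t, δ j t = 0 ∨ δ j t = 1)
    (w : Fin k → EuclideanSpace ℝ (Fin d))
    (hw : ∀ j, w j = (η * v j) • ∑ t, δ j t • e (i t))
    (s : Fin d) (hout : 1 ≤ ∑ j, v j * max 0 (inner ℝ (w j) (e s) : ℝ)) :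
    (∀ s' : Fin d, 1 ≤ (1 : ℝ) * (inner ℝ ω (e s') : ℝ)) ∧ ‖ω‖ ^ 2 = (d : ℝ) ∧
      (1 / (η * ∑ j, (v j) ^ 2) ≤ (p : ℝ)) ∧
      ((d : ℝ) / (η * ∑ j, (v j) ^ 2) ≤ ((d * p : ℕ) : ℝ)) := by
  have hinner : ∀ (x : EuclideanSpace ℝ (Fin d)) (s' : Fin d),
      (inner ℝ x (e s') : ℝ) = x s' := by
    intro x s'
    rw [he, EuclideanSpace.inner_single_right]
    simp
  have part1 : ∀ s' : Fin d, 1 ≤ (1 : ℝ) * (inner ℝ ω (e s') : ℝ) := by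
    intro s'
    rw [hinner, hω]; norm_num
  have part2 : ‖ω‖ ^ 2 = (d : ℝ) := by
    rw [EuclideanSpace.norm_eq]
    rw [Real.sq_sqrt (by positivity)]
    simp [hω]
  have hp' : (1 : ℝ) ≤ (p : ℝ) := by exact_mod_cast hp
  set C : Fin k → ℝ := fun j => ∑ t ∈ Finset.univ.filter (fun t => i t = s), δ j t with hC
  have hws : ∀ j, (inner ℝ (w j) (e s) : ℝ) = η * v j * C j := by
    intro j
    rw [hw, real_inner_smul_left, sum_inner]
    have : ∀ t : Fin (d * p), (inner ℝ (δ j t • e (i t)) (e s) : ℝ)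
        = if i t = s then δ j t else 0 := by
      intro t
      rw [real_inner_smul_left, hinner, he, EuclideanSpace.single_apply]
      by_cases h : i t = s
      · simp [h]
      · have h' : ¬ (s = i t) := fun hh => h hh.symm
        simp [h, h']
    rw [Finset.sum_congr rfl fun t _ => this t]
    rw [← Finset.sum_filter]
  have hC0 : ∀ j, 0 ≤ C j := by
    intro j
    apply Finset.sum_nonneg
    intro t _
    rcases hδ j t with h | h <;> simp [h]
  have hCp : ∀ j, C j ≤ p := by
    intro j
    have : C j ≤ ∑ t ∈ Finset.univ.filter (fun t => i t = s), (1 : ℝ) := by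
      apply Finset.sum_le_sum
      intro t _
      rcases hδ j t with h | h <;> simp [h]
    rw [Finset.sum_const, hi] at this
    simpa using this
  have hterm : ∀ j, v j * max 0 (inner ℝ (w j) (e s) : ℝ) ≤ η * (v j) ^ 2 * p := by
    intro j
    rw [hws]
    rcases le_total (η * v j * C j) 0 with h | h
    · rw [max_eq_left h]
      have : (0:ℝ) ≤ η * (v j) ^ 2 * p := by positivity
      linarith
    · rw [max_eq_right h]
      have key : η * (v j) ^ 2 * C j ≤ η * (v j) ^ 2 * p :=
        mul_le_mul_of_nonneg_left (hCp j) (by positivity)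
      nlinarith [key]
  have hsum : (1 : ℝ) ≤ η * (∑ j, (v j) ^ 2) * p := by
    calc (1 : ℝ) ≤ ∑ j, v j * max 0 (inner ℝ (w j) (e s) : ℝ) := hout
      _ ≤ ∑ j, η * (v j) ^ 2 * p := Finset.sum_le_sum fun j _ => hterm j
      _ = η * (∑ j, (v j) ^ 2) * p := by rw [Finset.mul_sum, Finset.sum_mul]
  have hApos : 0 < η * ∑ j, (v j) ^ 2 := by
    by_contra h
    push_neg at h
    have hpnn : (0 : ℝ) ≤ p := Nat.cast_nonneg p
    nlinarith
  have part3 : 1 / (η * ∑ j, (v j) ^ 2) ≤ (p : ℝ) := by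
    rw [div_le_iff₀ hApos]
    linarith [hsum]
  refine ⟨part1, part2, part3, ?_⟩
  have hd' : (0 : ℝ) ≤ d := Nat.cast_nonneg d
  calc (d : ℝ) / (η * ∑ j, (v j) ^ 2) = d * (1 / (η * ∑ j, (v j) ^ 2)) := by ring
    _ ≤ d * p := mul_le_mul_of_nonneg_left part3 hd'
    _ = ((d * p : ℕ) : ℝ) := by push_cast; ring
end

section
/- Telescoped norm bound along a trajectory of non-zero updates: Suppose W⁰, W¹, …, Wᵗ ∈ ℝ^{k×d} is a sequence where each Wˢ⁺¹ is obtained from Wˢ by a non-zero update of Algorithm 1 (i.e., there is a datum (x, y) with ‖x‖₂ ≤ 1 and Σ_j y v_j max(0, ⟨w_jˢ, x⟩) < 1, and noise ε obeying ε_j = 0 whenever y v_j < 0, such that w_jˢ⁺¹ = w_jˢ + η y v_j 1{⟨w_jˢ, x⟩ + ε_j ≥ 0} x for each j). Then ‖Wᵗ‖_F² ≤ ‖W⁰‖_F² + t(η²‖v‖₂² + 2η), where ‖W‖_F² = Σ_{j=1}^k ‖w_j‖₂². -/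
private lemma one_step_bound
    {d k : ℕ} (η : ℝ) (hη : 0 < η) (v : Fin k → ℝ)
    (Ws Ws1 : Fin k → EuclideanSpace ℝ (Fin d))
    (h : ∃ (x : EuclideanSpace ℝ (Fin d)) (y : ℝ) (ε : Fin k → ℝ),
      ‖x‖ ≤ 1 ∧ (y = 1 ∨ y = -1) ∧
      (∑ j, y * v j * max 0 (inner ℝ (Ws j) x : ℝ)) < 1 ∧
      (∀ j, y * v j < 0 → ε j = 0) ∧
      (∀ j, Ws1 j = Ws j +
        (η * y * v j * (if 0 ≤ (inner ℝ (Ws j) x : ℝ) + ε j then (1 : ℝ) else 0)) • x)) :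
    ∑ j, ‖Ws1 j‖ ^ 2 ≤ ∑ j, ‖Ws j‖ ^ 2 + (η ^ 2 * (∑ j, (v j) ^ 2) + 2 * η) := by
  obtain ⟨x, y, ε, hx, hy, hsum, hε, hupd⟩ := h
  have hy2 : y ^ 2 = 1 := by rcases hy with h | h <;> simp [h]
  have hx2 : ‖x‖ ^ 2 ≤ 1 := by
    have := norm_nonneg x; nlinarith
  -- pointwise expansion
  have key : ∀ j, ‖Ws1 j‖ ^ 2 ≤ ‖Ws j‖ ^ 2
      + 2 * η * (y * v j * max 0 (inner ℝ (Ws j) x : ℝ)) + η ^ 2 * (v j) ^ 2 := by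
    intro j
    set c : ℝ := η * y * v j * (if 0 ≤ (inner ℝ (Ws j) x : ℝ) + ε j then (1 : ℝ) else 0) with hc
    have hexp : ‖Ws1 j‖ ^ 2 = ‖Ws j‖ ^ 2 + 2 * (c * (inner ℝ (Ws j) x : ℝ)) + c ^ 2 * ‖x‖ ^ 2 := by
      rw [hupd j, @norm_add_sq_real, inner_smul_right, norm_smul,
        Real.norm_eq_abs, mul_pow, sq_abs]
    have hB : c ^ 2 * ‖x‖ ^ 2 ≤ η ^ 2 * (v j) ^ 2 := by
      have hc2 : c ^ 2 ≤ η ^ 2 * (v j) ^ 2 := by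
        rw [hc]
        split_ifs <;> nlinarith [sq_nonneg (η * v j)]
      nlinarith [sq_nonneg c]
    have hA : c * (inner ℝ (Ws j) x : ℝ) ≤ η * (y * v j * max 0 (inner ℝ (Ws j) x : ℝ)) := by
      rw [hc]
      by_cases hind : 0 ≤ (inner ℝ (Ws j) x : ℝ) + ε j
      · simp only [if_pos hind, mul_one]
        rcases lt_or_ge (y * v j) 0 with hyv | hyv
        · have hε0 := hε j hyv
          have hin : 0 ≤ (inner ℝ (Ws j) x : ℝ) := by rw [hε0] at hind; linarith
          rw [max_eq_right hin]; exact le_of_eq (by ring)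
        · have hmax : (inner ℝ (Ws j) x : ℝ) ≤ max 0 (inner ℝ (Ws j) x : ℝ) := le_max_right _ _
          nlinarith [mul_nonneg hη.le hyv, mul_le_mul_of_nonneg_left hmax (mul_nonneg hη.le hyv)]
      · simp only [if_neg hind, mul_zero, zero_mul]
        rcases lt_or_ge (y * v j) 0 with hyv | hyv
        · have hε0 := hε j hyv
          have hin : (inner ℝ (Ws j) x : ℝ) < 0 := by
            rw [hε0] at hind; push_neg at hind; linarith
          rw [max_eq_left hin.le]; simp
        · have : 0 ≤ max 0 (inner ℝ (Ws j) x : ℝ) := le_max_left _ _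
          exact mul_nonneg hη.le (mul_nonneg hyv this)
    nlinarith
  calc ∑ j, ‖Ws1 j‖ ^ 2
      ≤ ∑ j, (‖Ws j‖ ^ 2 + 2 * η * (y * v j * max 0 (inner ℝ (Ws j) x : ℝ)) + η ^ 2 * (v j) ^ 2) :=
        Finset.sum_le_sum fun j _ => key j
    _ = ∑ j, ‖Ws j‖ ^ 2 + 2 * η * (∑ j, y * v j * max 0 (inner ℝ (Ws j) x : ℝ))
          + η ^ 2 * (∑ j, (v j) ^ 2) := by
        rw [Finset.sum_add_distrib, Finset.sum_add_distrib, Finset.mul_sum, Finset.mul_sum]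
    _ ≤ ∑ j, ‖Ws j‖ ^ 2 + (η ^ 2 * (∑ j, (v j) ^ 2) + 2 * η) := by nlinarith

/-- Telescoped norm bound along a trajectory of non-zero updates of Algorithm 1:
after `t` non-zero updates, `‖Wᵗ‖_F² ≤ ‖W⁰‖_F² + t (η² ‖v‖₂² + 2η)`, where
`‖W‖_F² = ∑ j ‖w_j‖₂²`. -/
theorem telescoped_norm_bound
    {d k : ℕ} (η : ℝ) (hη : 0 < η) (v : Fin k → ℝ)
    (W : ℕ → Fin k → EuclideanSpace ℝ (Fin d)) (t : ℕ)
    (hstep : ∀ s < t, ∃ (x : EuclideanSpace ℝ (Fin d)) (y : ℝ) (ε : Fin k → ℝ),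
      ‖x‖ ≤ 1 ∧ (y = 1 ∨ y = -1) ∧
      (∑ j, y * v j * max 0 (inner ℝ (W s j) x : ℝ)) < 1 ∧
      (∀ j, y * v j < 0 → ε j = 0) ∧
      (∀ j, W (s + 1) j = W s j +
        (η * y * v j * (if 0 ≤ (inner ℝ (W s j) x : ℝ) + ε j then (1 : ℝ) else 0)) • x)) :
    ∑ j, ‖W t j‖ ^ 2 ≤ ∑ j, ‖W 0 j‖ ^ 2 + t * (η ^ 2 * (∑ j, (v j) ^ 2) + 2 * η) := by
  induction t with
  | zero => simp
  | succ n ih =>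
    have h1 := ih (fun s hs => hstep s (hs.trans (Nat.lt_succ_self n)))
    have h2 := one_step_bound η hη v (W n) (W (n+1)) (hstep n (Nat.lt_succ_self n))
    push_cast
    push_cast at h1
    nlinarith
end

section
/- One-step alignment growth bound for a non-zero update: Let v ∈ ℝ^k have all entries nonzero, set v_min = min_j |v_j|, and let Ω* ∈ ℝ^{k×d} be the matrix whose j-th row equals (sgn(v_j)/v_min)·ω*. Let (x, y) be a datum with y⟨ω*, x⟩ ≥ 1, let ε ∈ ℝ^k be any noise vector, and suppose at least one index j satisfies ⟨w_j, x⟩ + ε_j ≥ 0. Define w_j⁺ = w_j + η y v_j · 1{⟨w_j, x⟩ + ε_j ≥ 0} · x for each j. Then ⟨W⁺, Ω*⟩_F ≥ ⟨W, Ω*⟩_F + η, where ⟨·,·⟩_F denotes the Frobenius (entrywise) inner product. -/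
/-- One-step alignment growth bound for a non-zero update of Algorithm 1: the Frobenius
inner product of the iterate with the reference matrix `Ω*` (whose `j`-th row is
`(sgn(v_j)/v_min) ω*`) increases by at least `η` at every non-zero update. -/
theorem one_step_alignment_growth_bound
    {d k : ℕ} (η : ℝ) (hη : 0 < η)
    (v : Fin k → ℝ) (hv : ∀ j, v j ≠ 0)
    (vmin : ℝ) (hvmin : IsLeast (Set.range fun j => |v j|) vmin)
    (ω : EuclideanSpace ℝ (Fin d))
    (Ω : Fin k → EuclideanSpace ℝ (Fin d))
    (hΩ : ∀ j, Ω j = (((if 0 < v j then (1 : ℝ) else -1)) / vmin) • ω)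
    (w wplus : Fin k → EuclideanSpace ℝ (Fin d))
    (x : EuclideanSpace ℝ (Fin d)) (y : ℝ) (hsep : 1 ≤ y * (inner ℝ ω x : ℝ))
    (ε : Fin k → ℝ) (hnz : ∃ j, 0 ≤ (inner ℝ (w j) x : ℝ) + ε j)
    (hupd : ∀ j, wplus j = w j +
      (η * y * v j * (if 0 ≤ (inner ℝ (w j) x : ℝ) + ε j then (1 : ℝ) else 0)) • x) :
    ∑ j, (inner ℝ (w j) (Ω j) : ℝ) + η ≤ ∑ j, (inner ℝ (wplus j) (Ω j) : ℝ) := by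
  obtain ⟨j0, hj0⟩ := hnz
  obtain ⟨⟨jm, hjm⟩, hlb⟩ := hvmin
  have hvpos : 0 < vmin := hjm ▸ abs_pos.mpr (hv jm)
  have habs : ∀ j, |v j| = v j * (if 0 < v j then (1:ℝ) else -1) := by
    intro j
    rcases lt_or_ge 0 (v j) with h | h
    · simp [h, abs_of_pos h]
    · rw [if_neg (not_lt.mpr h), abs_of_nonpos h]; ring
  have hlb' : ∀ j, vmin ≤ v j * (if 0 < v j then (1:ℝ) else -1) := by
    intro j
    rw [← habs j]
    exact hlb ⟨j, rfl⟩
  have key : ∀ j, (inner ℝ (wplus j) (Ω j) : ℝ) = (inner ℝ (w j) (Ω j) : ℝ) +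
      η * y * v j * (if 0 ≤ (inner ℝ (w j) x : ℝ) + ε j then (1:ℝ) else 0) *
      ((if 0 < v j then (1:ℝ) else -1) / vmin * (inner ℝ ω x : ℝ)) := by
    intro j
    rw [hupd j, hΩ j, inner_add_left, real_inner_smul_left, real_inner_smul_right,
      real_inner_smul_right, real_inner_comm x ω]
  have hterm : ∀ j, (if 0 ≤ (inner ℝ (w j) x : ℝ) + ε j then η else 0) ≤
      η * y * v j * (if 0 ≤ (inner ℝ (w j) x : ℝ) + ε j then (1:ℝ) else 0) *
      ((if 0 < v j then (1:ℝ) else -1) / vmin * (inner ℝ ω x : ℝ)) := by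
    intro j
    by_cases hc : 0 ≤ (inner ℝ (w j) x : ℝ) + ε j
    · rw [if_pos hc, if_pos hc]
      have h1 : 1 ≤ (v j * (if 0 < v j then (1:ℝ) else -1)) / vmin :=
        (one_le_div hvpos).mpr (hlb' j)
      have h2 : 1 ≤ (v j * (if 0 < v j then (1:ℝ) else -1)) / vmin * (y * (inner ℝ ω x : ℝ)) := by
        nlinarith
      have h3 : η ≤ η * ((v j * (if 0 < v j then (1:ℝ) else -1)) / vmin * (y * (inner ℝ ω x : ℝ))) :=
        le_mul_of_one_le_right hη.le h2
      calc η ≤ η * ((v j * (if 0 < v j then (1:ℝ) else -1)) / vmin * (y * (inner ℝ ω x : ℝ))) := h3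
        _ = η * y * v j * 1 * ((if 0 < v j then (1:ℝ) else -1) / vmin * (inner ℝ ω x : ℝ)) := by
          ring
    · rw [if_neg hc, if_neg hc]
      simp
  have hsum : ∑ j, (if 0 ≤ (inner ℝ (w j) x : ℝ) + ε j then η else 0) ≥ η := by
    have := Finset.single_le_sum (f := fun j => (if 0 ≤ (inner ℝ (w j) x : ℝ) + ε j then η else 0))
      (fun j _ => by positivity) (Finset.mem_univ j0)
    rwa [if_pos hj0] at this
  calc ∑ j, (inner ℝ (w j) (Ω j) : ℝ) + η
      ≤ ∑ j, (inner ℝ (w j) (Ω j) : ℝ) +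
        ∑ j, (if 0 ≤ (inner ℝ (w j) x : ℝ) + ε j then η else 0) := by linarith
    _ ≤ ∑ j, (inner ℝ (w j) (Ω j) : ℝ) +
        ∑ j, (η * y * v j * (if 0 ≤ (inner ℝ (w j) x : ℝ) + ε j then (1:ℝ) else 0) *
          ((if 0 < v j then (1:ℝ) else -1) / vmin * (inner ℝ ω x : ℝ))) := by
        gcongr with j
        exact hterm j
    _ = ∑ j, (inner ℝ (wplus j) (Ω j) : ℝ) := by
        rw [← Finset.sum_add_distrib]
        exact Finset.sum_congr rfl fun j _ => (key j).symm
end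

section
/- Telescoped alignment bound along a trajectory of non-zero updates: Let v ∈ ℝ^k have all entries nonzero, v_min = min_j |v_j|, and Ω* ∈ ℝ^{k×d} have j-th row (sgn(v_j)/v_min)·ω*, where ω* satisfies y_i⟨ω*, x_i⟩ ≥ 1 for all data. Suppose W⁰, W¹, …, Wᵗ is a sequence in which each Wˢ⁺¹ is obtained from Wˢ by a non-zero update of Algorithm 1 on some datum (x_{i_s}, y_{i_s}) of the separable dataset (so y_{i_s}⟨ω*, x_{i_s}⟩ ≥ 1 and at least one perturbed ReLU indicator 1{⟨w_jˢ, x_{i_s}⟩ + ε_jˢ ≥ 0} equals 1, with w_jˢ⁺¹ = w_jˢ + η y_{i_s} v_j 1{⟨w_jˢ, x_{i_s}⟩ + ε_jˢ ≥ 0} x_{i_s}). Then ⟨Wᵗ, Ω*⟩_F ≥ ⟨W⁰, Ω*⟩_F + tη. -/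
/-- Telescoped alignment bound along a trajectory of non-zero updates of Algorithm 1 on a
linearly separable dataset: `⟨Wᵗ, Ω*⟩_F ≥ ⟨W⁰, Ω*⟩_F + t η`, where the `j`-th row of `Ω*`
is `(sgn(v_j)/v_min) ω*`. -/
theorem telescoped_alignment_bound
    {d k n : ℕ} (η : ℝ) (hη : 0 < η)
    (v : Fin k → ℝ) (hv : ∀ j, v j ≠ 0)
    (vmin : ℝ) (hvmin : IsLeast (Set.range fun j => |v j|) vmin)
    (x : Fin n → EuclideanSpace ℝ (Fin d)) (y : Fin n → ℝ)
    (ω : EuclideanSpace ℝ (Fin d)) (hsep : ∀ i, 1 ≤ y i * (inner ℝ ω (x i) : ℝ))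
    (Ω : Fin k → EuclideanSpace ℝ (Fin d))
    (hΩ : ∀ j, Ω j = (((if 0 < v j then (1 : ℝ) else -1)) / vmin) • ω)
    (W : ℕ → Fin k → EuclideanSpace ℝ (Fin d)) (t : ℕ)
    (hstep : ∀ s < t, ∃ (i : Fin n) (ε : Fin k → ℝ),
      (∃ j, 0 ≤ (inner ℝ (W s j) (x i) : ℝ) + ε j) ∧
      (∀ j, W (s + 1) j = W s j +
        (η * y i * v j *
          (if 0 ≤ (inner ℝ (W s j) (x i) : ℝ) + ε j then (1 : ℝ) else 0)) • x i)) :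
    ∑ j, (inner ℝ (W 0 j) (Ω j) : ℝ) + t * η ≤ ∑ j, (inner ℝ (W t j) (Ω j) : ℝ) := by
  obtain ⟨hmem, hlb⟩ := hvmin
  obtain ⟨j0, hj0⟩ := hmem
  have hvpos : 0 < vmin := hj0 ▸ abs_pos.mpr (hv j0)
  have key : ∀ s, (∃ (i : Fin n) (ε : Fin k → ℝ),
      (∃ j, 0 ≤ (inner ℝ (W s j) (x i) : ℝ) + ε j) ∧
      (∀ j, W (s + 1) j = W s j +
        (η * y i * v j *
          (if 0 ≤ (inner ℝ (W s j) (x i) : ℝ) + ε j then (1 : ℝ) else 0)) • x i)) →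
      ∑ j, (inner ℝ (W s j) (Ω j) : ℝ) + η ≤ ∑ j, (inner ℝ (W (s+1) j) (Ω j) : ℝ) := by
    rintro s ⟨i, ε, ⟨j1, hj1⟩, hupd⟩
    have hterm : ∀ j, (inner ℝ (W s j) (Ω j) : ℝ) +
        η * (if 0 ≤ (inner ℝ (W s j) (x i) : ℝ) + ε j then (1:ℝ) else 0)
        ≤ (inner ℝ (W (s+1) j) (Ω j) : ℝ) := by
      intro j
      rw [hupd j, hΩ j]; simp only [inner_add_left, real_inner_smul_left, real_inner_smul_right]
      have hcomm : (inner ℝ (x i) ω : ℝ) = (inner ℝ ω (x i) : ℝ) := real_inner_comm _ _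
      rw [hcomm]
      by_cases hind : 0 ≤ (inner ℝ (W s j) (x i) : ℝ) + ε j
      · simp only [if_pos hind]
        have habs : v j * ((if 0 < v j then (1:ℝ) else -1)) = |v j| := by
          split_ifs with h
          · rw [abs_of_pos h]; ring
          · rw [abs_of_neg (lt_of_le_of_ne (not_lt.mp h) (hv j))]; ring
        have hle : vmin ≤ |v j| := hlb ⟨j, rfl⟩
        have ha : 1 ≤ y i * (inner ℝ ω (x i) : ℝ) := hsep i
        have hkey : η ≤ η * y i * v j * 1 * ((if 0 < v j then (1:ℝ) else -1) / vmin * (inner ℝ ω (x i) : ℝ)) := by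
          have : η * y i * v j * 1 * ((if 0 < v j then (1:ℝ) else -1) / vmin * (inner ℝ ω (x i) : ℝ))
              = η * (|v j| / vmin) * (y i * (inner ℝ ω (x i) : ℝ)) := by
            rw [← habs]; ring
          rw [this]
          have hr : 1 ≤ |v j| / vmin := (one_le_div hvpos).mpr hle
          have h1 : 1 ≤ (|v j| / vmin) * (y i * (inner ℝ ω (x i) : ℝ)) := by nlinarith
          calc η = η * 1 := (mul_one η).symm
            _ ≤ η * ((|v j| / vmin) * (y i * (inner ℝ ω (x i) : ℝ))) :=
                mul_le_mul_of_nonneg_left h1 hη.le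
            _ = η * (|v j| / vmin) * (y i * (inner ℝ ω (x i) : ℝ)) := by ring
        linarith
      · simp only [if_neg hind]
        simp
    have hsum := Finset.sum_le_sum (s := Finset.univ) (fun j _ => hterm j)
    rw [Finset.sum_add_distrib] at hsum
    have hone : η ≤ ∑ j, η * (if 0 ≤ (inner ℝ (W s j) (x i) : ℝ) + ε j then (1:ℝ) else 0) := by
      have := Finset.single_le_sum
        (f := fun j => η * (if 0 ≤ (inner ℝ (W s j) (x i) : ℝ) + ε j then (1:ℝ) else 0))
        (fun j _ => by positivity) (Finset.mem_univ j1)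
      refine le_trans ?_ this
      show η ≤ η * (if 0 ≤ (inner ℝ (W s j1) (x i) : ℝ) + ε j1 then (1:ℝ) else 0)
      rw [if_pos hj1, mul_one]
    linarith
  induction t with
  | zero => simp
  | succ t ih =>
    have h1 := ih (fun s hs => hstep s (Nat.lt_succ_of_lt hs))
    have h2 := key t (hstep t (Nat.lt_succ_self t))
    push_cast
    linarith
end

section
/- Gaussian escape probability bound (core of Proposition 1): Let N be a finite index set, γ > 0 and w_max > 0. Let w_j ∈ ℝ^d with ‖w_j‖₂ ≤ w_max for all j ∈ N, let x ∈ ℝ^d with ‖x‖₂ ≤ 1, and let (ε_j)_{j∈N} be independent random variables each distributed N(0, γ²). Then the probability that ⟨w_j, x⟩ + ε_j < 0 simultaneously for all j ∈ N is at most [Φ(w_max/γ)]^{|N|}, where Φ is the cumulative distribution function of the standard Gaussian distribution N(0,1). -/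
open MeasureTheory ProbabilityTheory

/-- Gaussian escape probability bound (core of Proposition 1): if the rows `w_j` have norm
at most `w_max`, `‖x‖₂ ≤ 1`, and the `ε_j` are i.i.d. `N(0, γ²)` noises, then the
probability that all perturbed pre-activations `⟨w_j, x⟩ + ε_j` are simultaneously
negative is at most `Φ(w_max/γ)^{|N|}`, with `Φ` the standard Gaussian CDF. -/
theorem gaussian_escape_probability
    {d : ℕ} {ι : Type*} [Fintype ι]
    {Ω : Type*} [MeasureSpace Ω] [IsProbabilityMeasure (ℙ : Measure Ω)]
    (γ wmax : ℝ) (hγ : 0 < γ) (hwmax : 0 < wmax)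
    (w : ι → EuclideanSpace ℝ (Fin d)) (hw : ∀ j, ‖w j‖ ≤ wmax)
    (x : EuclideanSpace ℝ (Fin d)) (hx : ‖x‖ ≤ 1)
    (ε : ι → Ω → ℝ) (hmeas : ∀ j, Measurable (ε j))
    (hindep : iIndepFun ε ℙ)
    (hlaw : ∀ j, Measure.map (ε j) ℙ = gaussianReal 0 (Real.toNNReal (γ ^ 2)))
    (Φ : ℝ → ℝ)
    (hΦ : ∀ z, Φ z = (1 / Real.sqrt (2 * Real.pi)) *
      ∫ s in Set.Iic z, Real.exp (-(s ^ 2) / 2)) :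
    (ℙ {a : Ω | ∀ j, (inner ℝ (w j) x : ℝ) + ε j a < 0}).toReal ≤
      Φ (wmax / γ) ^ Fintype.card ι := by
  have hΦnonneg : 0 ≤ Φ (wmax / γ) := by
    rw [hΦ]
    apply mul_nonneg (by positivity)
    exact integral_nonneg fun s => (Real.exp_pos _).le
  -- standard Gaussian measure of Iic (wmax/γ) equals ofReal Φ
  have hstd : (gaussianReal 0 1) (Set.Iic (wmax / γ)) = ENNReal.ofReal (Φ (wmax / γ)) := by
    rw [gaussianReal_apply_eq_integral 0 one_ne_zero, hΦ]
    congr 1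
    rw [← integral_const_mul]
    refine setIntegral_congr_fun measurableSet_Iic fun s _ => ?_
    simp [gaussianPDFReal, neg_div, one_div]
  -- the variance identification
  have hvar : (⟨γ ^ 2, sq_nonneg γ⟩ : NNReal) * 1 = Real.toNNReal (γ ^ 2) := by
    ext
    simp [Real.coe_toNNReal _ (sq_nonneg γ)]
  have hmap : gaussianReal 0 (Real.toNNReal (γ ^ 2)) =
      (gaussianReal 0 1).map (γ * ·) := by
    rw [gaussianReal_map_const_mul γ, mul_zero]; exact congrArg _ hvar.symm
  -- per-coordinate bound
  have key : ∀ j, ℙ (ε j ⁻¹' Set.Iio (-(inner ℝ (w j) x : ℝ)))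
      ≤ ENNReal.ofReal (Φ (wmax / γ)) := by
    intro j
    have hc : -(inner ℝ (w j) x : ℝ) ≤ wmax := by
      have h1 : |(inner ℝ (w j) x : ℝ)| ≤ ‖w j‖ * ‖x‖ := abs_real_inner_le_norm _ _
      have h2 : ‖w j‖ * ‖x‖ ≤ wmax * 1 :=
        mul_le_mul (hw j) hx (norm_nonneg _) hwmax.le
      nlinarith [neg_abs_le (inner ℝ (w j) x : ℝ)]
    rw [← Measure.map_apply (hmeas j) measurableSet_Iio, hlaw j, hmap,
      Measure.map_apply (measurable_const_mul γ) measurableSet_Iio, ← hstd]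
    apply measure_mono
    intro u hu
    simp only [Set.mem_preimage, Set.mem_Iio] at hu
    exact le_of_lt ((lt_div_iff₀ hγ).mpr (by nlinarith))
  -- rewrite the event as an intersection
  have hset : {a : Ω | ∀ j, (inner ℝ (w j) x : ℝ) + ε j a < 0}
      = ⋂ j, ε j ⁻¹' Set.Iio (-(inner ℝ (w j) x : ℝ)) := by
    ext a
    simp only [Set.mem_setOf_eq, Set.mem_iInter, Set.mem_preimage, Set.mem_Iio]
    constructor
    · intro h j; linarith [h j]
    · intro h j; linarith [h j]
  rw [hset, hindep.meas_iInter (fun j => ⟨Set.Iio _, measurableSet_Iio, rfl⟩)]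
  have hprod : (∏ j, ℙ (ε j ⁻¹' Set.Iio (-(inner ℝ (w j) x : ℝ))))
      ≤ ENNReal.ofReal (Φ (wmax / γ)) ^ Fintype.card ι := by
    rw [← Finset.card_univ, ← Finset.prod_const]
    exact Finset.prod_le_prod' fun j _ => key j
  calc (∏ j, ℙ (ε j ⁻¹' Set.Iio (-(inner ℝ (w j) x : ℝ)))).toReal
      ≤ (ENNReal.ofReal (Φ (wmax / γ)) ^ Fintype.card ι).toReal :=
        ENNReal.toReal_mono (by simp [ENNReal.pow_ne_top]) hprod
    _ = Φ (wmax / γ) ^ Fintype.card ι := by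
        rw [ENNReal.toReal_pow, ENNReal.toReal_ofReal hΦnonneg]
end

section
/- Proposition 2(i) (non-convexity of the loss): There exist an input dimension d, a number of neurons k ≥ 2, a fixed second-layer vector v ∈ ℝ^k with at least one positive and at least one negative entry, and a linearly separable training set S = {(x_i, y_i)}_{i=1}^n with ‖x_i‖₂ ≤ 1 and y_i ∈ {−1, +1}, such that the function W ↦ L_S(W) on ℝ^{k×d} is not convex. -/
/-- Proposition 2(i): there exists an instance — an input dimension `d`, a network with
`k ≥ 2` hidden neurons, a fixed second-layer vector `v` with at least one positive and at
least one negative entry, and a linearly separable training set with `‖x_i‖₂ ≤ 1` and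
labels in `{−1,+1}` — on which the empirical hinge loss `W ↦ L_S(W)` is not convex. -/
theorem hinge_loss_nonconvex :
    ∃ (d k n : ℕ) (v : Fin k → ℝ) (x : Fin n → EuclideanSpace ℝ (Fin d))
      (y : Fin n → ℝ) (ω : EuclideanSpace ℝ (Fin d)),
      2 ≤ k ∧ (∃ j, 0 < v j) ∧ (∃ j, v j < 0) ∧
      (∀ i, ‖x i‖ ≤ 1) ∧ (∀ i, y i = 1 ∨ y i = -1) ∧
      (∀ i, 1 ≤ y i * (inner ℝ ω (x i) : ℝ)) ∧
      ¬ ConvexOn ℝ Set.univ (fun W : Fin k → EuclideanSpace ℝ (Fin d) =>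
          (1 / n : ℝ) *
            ∑ i, max 0 (1 - y i * ∑ j, v j * max 0 (inner ℝ (W j) (x i) : ℝ))) := by
  refine ⟨1, 2, 1, ![1, -1], fun _ => WithLp.toLp 2 (fun _ => 1), fun _ => 1, WithLp.toLp 2 (fun _ => 1),
    le_refl 2, ⟨0, by norm_num⟩, ⟨1, by norm_num⟩, ?_, fun i => Or.inl rfl, ?_, ?_⟩
  · intro i
    rw [EuclideanSpace.norm_eq]
    simp
  · intro i
    simp [PiLp.inner_apply, EuclideanSpace.norm_eq]
  · intro h
    have hA : (fun _ => WithLp.toLp 2 (fun _ => (-1 : ℝ)) : Fin 2 → EuclideanSpace ℝ (Fin 1)) ∈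
        (Set.univ : Set (Fin 2 → EuclideanSpace ℝ (Fin 1))) := Set.mem_univ _
    have hB : (![WithLp.toLp 2 (fun _ => (1 : ℝ)), WithLp.toLp 2 (fun _ => (-1 : ℝ))] : Fin 2 → EuclideanSpace ℝ (Fin 1)) ∈
        (Set.univ : Set (Fin 2 → EuclideanSpace ℝ (Fin 1))) := Set.mem_univ _
    have key := h.2 hA hB (by norm_num : (0:ℝ) ≤ 1/2) (by norm_num : (0:ℝ) ≤ 1/2)
      (by norm_num)
    simp only [PiLp.inner_apply, RCLike.inner_apply, conj_trivial, Fin.sum_univ_one,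
      Fin.sum_univ_two, Fin.isValue, Matrix.cons_val_zero, Matrix.cons_val_one,
      Matrix.head_cons, Pi.add_apply, Pi.smul_apply, smul_eq_mul, Nat.cast_one] at key
    norm_num at key
end
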